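/- The set of all points of PG(r-1,2) can be partitioned into lines if and only if r is even; moreover, if r is odd then the multiset consisting of every point taken three times can be partitioned into lines (for r ≥ 3). -/

import Mathlib

/-- The ambient vector space `F_2^r`. -/
abbrev Vec (r : ℕ) := Fin r → ZMod 2

/-- A line of `PG(r-1,2)`: a 2-dimensional subspace of `F_2^r`. -/
def isLine {r : ℕ} (L : Submodule (ZMod 2) (Vec r)) : Prop :=
  Module.finrank (ZMod 2) L = 2

/-- A point of `PG(r-1,2)`: a 1-dimensional subspace of `F_2^r`. -/
def isPoint {r : ℕ} (P : Submodule (ZMod 2) (Vec r)) : Prop :=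
  Module.finrank (ZMod 2) P = 1

/-- A hyperplane of `PG(r-1,2)`: an `(r-1)`-dimensional subspace of `F_2^r`. -/
def isHyperplane {r : ℕ} (H : Submodule (ZMod 2) (Vec r)) : Prop :=
  Module.finrank (ZMod 2) H = r - 1

open scoped Classical in
/-- The number of members of the multiset `S` (of lines) contained in the subspace `H`. -/
noncomputable def linesIn {r : ℕ} (S : Multiset (Submodule (ZMod 2) (Vec r)))
    (H : Submodule (ZMod 2) (Vec r)) : ℕ :=
  Multiset.card (S.filter (fun L => L ≤ H))

/-- An `(n,r,s)` system: a multiset of `n` lines of `PG(r-1,2)` such that every hyperplane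
contains at most `s` of them and some hyperplane contains exactly `s` of them. -/
def IsSystem (r n s : ℕ) (S : Multiset (Submodule (ZMod 2) (Vec r))) : Prop :=
  Multiset.card S = n ∧ (∀ L ∈ S, isLine L) ∧
    (∀ H, isHyperplane H → linesIn S H ≤ s) ∧
    (∃ H, isHyperplane H ∧ linesIn S H = s)

open scoped Classical in
/-- The number of members of the multiset `𝒱` of subspaces containing the subspace `P`. -/
noncomputable def coverCount {r : ℕ} (𝒱 : Multiset (Submodule (ZMod 2) (Vec r)))
    (P : Submodule (ZMod 2) (Vec r)) : ℕ :=
  Multiset.card (𝒱.filter (fun W => P ≤ W))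



open scoped Classical

variable {V : Type*} [AddCommGroup V] [Module (ZMod 2) V]

lemma two_torsion (v : V) : v + v = 0 := by
  have : v + v = ((1 : ZMod 2) + 1) • v := by rw [add_smul, one_smul]
  rw [this, show (1 : ZMod 2) + 1 = 0 by decide, zero_smul]

lemma zmod2_cases (c : ZMod 2) : c = 0 ∨ c = 1 := by revert c; decide

lemma eq_of_add_eq_zero' {p q : V} (h : p + q = 0) : p = q := by
  have := congrArg (· + q) h
  simpa [add_assoc, two_torsion q] using this

lemma mem_span_pair_two (p q v : V) :
    v ∈ Submodule.span (ZMod 2) {p, q} ↔ v = 0 ∨ v = p ∨ v = q ∨ v = p + q := by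
  rw [Submodule.mem_span_pair]
  constructor
  · rintro ⟨c, d, rfl⟩
    rcases zmod2_cases c with rfl | rfl <;> rcases zmod2_cases d with rfl | rfl <;>
      simp [zero_smul, one_smul]
  · rintro (rfl | rfl | rfl | rfl)
    exacts [⟨0, 0, by simp⟩, ⟨1, 0, by simp⟩, ⟨0, 1, by simp⟩, ⟨1, 1, by simp⟩]

lemma finrank_span_pair_two {p q : V} (hp : p ≠ 0) (hq : q ≠ 0) (hpq : p ≠ q) :
    Module.finrank (ZMod 2) (Submodule.span (ZMod 2) {p, q}) = 2 := by
  have hli : LinearIndependent (ZMod 2) ![p, q] := by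
    rw [LinearIndependent.pair_iff]
    intro s t hst
    rcases zmod2_cases s with rfl | rfl <;> rcases zmod2_cases t with rfl | rfl
    · exact ⟨rfl, rfl⟩
    · exact absurd (by simpa using hst) hq
    · exact absurd (by simpa using hst) hp
    · exact absurd (eq_of_add_eq_zero' (by simpa using hst)) hpq
  have := finrank_span_eq_card hli
  rw [Matrix.range_cons, Matrix.range_cons_empty] at this
  rw [Set.singleton_union] at this
  simpa using this

lemma line_rep {L : Submodule (ZMod 2) V} [Module.Finite (ZMod 2) V]
    (hL : Module.finrank (ZMod 2) L = 2) :
    ∃ a b : V, a ≠ 0 ∧ b ≠ 0 ∧ a ≠ b ∧ L = Submodule.span (ZMod 2) {a, b} := by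
  let bb := Module.finBasisOfFinrankEq (ZMod 2) L hL
  refine ⟨(bb 0 : V), (bb 1 : V), ?_, ?_, ?_, ?_⟩
  · simpa using (bb.ne_zero 0)
  · simpa using (bb.ne_zero 1)
  · intro h
    exact absurd (Subtype.ext h : bb 0 = bb 1) (by simp [bb.injective.eq_iff])
  · have hsp := bb.span_eq
    have h2 := congrArg (Submodule.map L.subtype) hsp
    rw [Submodule.map_top, Submodule.range_subtype, Submodule.map_span] at h2
    have hset : (⇑L.subtype '' Set.range ⇑bb) = {(bb 0 : V), (bb 1 : V)} := by
      ext v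
      simp only [Set.mem_image, Set.mem_range, Set.mem_insert_iff, Set.mem_singleton_iff]
      constructor
      · rintro ⟨x, ⟨i, rfl⟩, rfl⟩
        fin_cases i <;> simp
      · rintro (rfl | rfl)
        exacts [⟨bb 0, ⟨0, rfl⟩, rfl⟩, ⟨bb 1, ⟨1, rfl⟩, rfl⟩]
    rw [hset] at h2
    exact h2.symm

noncomputable def cc (𝓛 : Multiset (Submodule (ZMod 2) V)) (v : V) : ℕ :=
  Multiset.card (𝓛.filter (fun L => v ∈ L))

@[simp] lemma cc_zero (v : V) : cc (0 : Multiset (Submodule (ZMod 2) V)) v = 0 := rfl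

lemma cc_cons (L : Submodule (ZMod 2) V) (𝓛 : Multiset (Submodule (ZMod 2) V)) (v : V) :
    cc (L ::ₘ 𝓛) v = (if v ∈ L then 1 else 0) + cc 𝓛 v := by
  unfold cc
  rw [Multiset.filter_cons]
  split <;> simp [Multiset.card_add, Nat.add_comm]

abbrev K2 : Type := Fin 2 → ZMod 2

noncomputable def latin (a b : V) : Multiset (Submodule (ZMod 2) (V × K2)) :=
  {Submodule.span (ZMod 2) {(a, ![1,0]), (b, ![0,1])},
   Submodule.span (ZMod 2) {(a, ![0,1]), (b, ![1,1])},
   Submodule.span (ZMod 2) {(a, ![1,1]), (b, ![1,0])}}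

lemma latin_cc {a b : V} (ha : a ≠ 0) (hb : b ≠ 0) (hab : a ≠ b) (v : V) (w : K2)
    (hv : v ≠ 0) (hw : w ≠ 0) :
    cc (latin a b) (v, w) = if v ∈ Submodule.span (ZMod 2) {a, b} then 1 else 0 := by
  have hba : b ≠ a := hab.symm
  have hab0 : a + b ≠ 0 := fun h => hab (eq_of_add_eq_zero' h)
  have hab0' : (0 : V) ≠ a + b := fun h => hab0 h.symm
  have haab : a ≠ a + b := fun h => hb (by simpa using (left_eq_add.mp h))
  have hbab : b ≠ a + b := fun h => ha (by simpa using (right_eq_add.mp h))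
  have haba : a + b ≠ a := fun h => haab h.symm
  have habb : a + b ≠ b := fun h => hbab h.symm
  have hwcases : w = ![1,0] ∨ w = ![0,1] ∨ w = ![1,1] := by
    have : ∀ w : K2, w = 0 ∨ w = ![1,0] ∨ w = ![0,1] ∨ w = ![1,1] := by decide
    rcases this w with h | h; exact absurd h hw; exact h
  show cc (_ ::ₘ _ ::ₘ _ ::ₘ 0) (v, w) = _
  rw [cc_cons, cc_cons, cc_cons, cc_zero]
  by_cases hvL : v ∈ Submodule.span (ZMod 2) {a, b}
  · rw [if_pos hvL]
    rw [mem_span_pair_two] at hvL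
    rcases hvL with h | h | h | h
    · exact absurd h hv
    all_goals subst h
    all_goals rcases hwcases with h | h | h <;> subst h <;>
      simp [mem_span_pair_two, Prod.ext_iff, Prod.mk_add_mk, ha, hb, hab, hba, hab0, hab0',
        haab, hbab, haba, habb, hv, show (![1,0] : K2) ≠ ![0,1] by decide,
        show (![0,1] : K2) ≠ ![1,0] by decide, show (![1,0] : K2) ≠ ![1,1] by decide,
        show (![1,1] : K2) ≠ ![1,0] by decide, show (![0,1] : K2) ≠ ![1,1] by decide,
        show (![1,1] : K2) ≠ ![0,1] by decide, show (![1,0] : K2) + ![0,1] = ![1,1] by decide,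
        show (![0,1] : K2) + ![1,1] = ![1,0] by decide,
        show (![1,1] : K2) + ![1,0] = ![0,1] by decide,
        show (![1,0] : K2) ≠ 0 by decide, show (![0,1] : K2) ≠ 0 by decide,
        show (![1,1] : K2) ≠ 0 by decide]
  · rw [if_neg hvL]
    rw [mem_span_pair_two] at hvL
    push_neg at hvL
    obtain ⟨h0, hA, hB, hAB⟩ := hvL
    simp [mem_span_pair_two, Prod.ext_iff, Prod.mk_add_mk, h0, hA, hB, hAB]

lemma latin_cc_wzero (a b : V) (v : V) (hv : v ≠ 0) :
    cc (latin a b) (v, (0 : K2)) = 0 := by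
  show cc (_ ::ₘ _ ::ₘ _ ::ₘ 0) (v, (0:K2)) = 0
  rw [cc_cons, cc_cons, cc_cons, cc_zero]
  simp [mem_span_pair_two, Prod.ext_iff, Prod.mk_add_mk, hv,
    show (0:K2) ≠ ![1,0] by decide, show (0:K2) ≠ ![0,1] by decide,
    show (0:K2) ≠ ![1,1] by decide,
    show (![1,0] : K2) + ![0,1] = ![1,1] by decide,
    show (![0,1] : K2) + ![1,1] = ![1,0] by decide,
    show (![1,1] : K2) + ![1,0] = ![0,1] by decide]

lemma latin_cc_vzero {a b : V} (ha : a ≠ 0) (hb : b ≠ 0) (hab : a ≠ b) (w : K2) (hw : w ≠ 0) :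
    cc (latin a b) ((0 : V), w) = 0 := by
  have hab0 : a + b ≠ 0 := fun h => hab (eq_of_add_eq_zero' h)
  have h0a : (0 : V) ≠ a := Ne.symm ha
  have h0b : (0 : V) ≠ b := Ne.symm hb
  have h0ab : (0 : V) ≠ a + b := Ne.symm hab0
  show cc (_ ::ₘ _ ::ₘ _ ::ₘ 0) ((0:V), w) = 0
  rw [cc_cons, cc_cons, cc_cons, cc_zero]
  simp [mem_span_pair_two, Prod.ext_iff, Prod.mk_add_mk, hw, h0a, h0b, h0ab]

noncomputable def repr2 (L : Submodule (ZMod 2) V) : V × V :=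
  if h : ∃ a b : V, a ≠ 0 ∧ b ≠ 0 ∧ a ≠ b ∧ L = Submodule.span (ZMod 2) {a, b} then
    (h.choose, h.choose_spec.choose) else (0, 0)

lemma repr2_spec {L : Submodule (ZMod 2) V}
    (h : ∃ a b : V, a ≠ 0 ∧ b ≠ 0 ∧ a ≠ b ∧ L = Submodule.span (ZMod 2) {a, b}) :
    (repr2 L).1 ≠ 0 ∧ (repr2 L).2 ≠ 0 ∧ (repr2 L).1 ≠ (repr2 L).2 ∧
      L = Submodule.span (ZMod 2) {(repr2 L).1, (repr2 L).2} := by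
  rw [repr2, dif_pos h]
  exact h.choose_spec.choose_spec

noncomputable def latinOf (L : Submodule (ZMod 2) V) : Multiset (Submodule (ZMod 2) (V × K2)) :=
  latin (repr2 L).1 (repr2 L).2

noncomputable def emb2 (L : Submodule (ZMod 2) V) : Submodule (ZMod 2) (V × K2) :=
  Submodule.map (LinearMap.inl (ZMod 2) V K2) L

lemma mem_emb2 {L : Submodule (ZMod 2) V} {v : V} {w : K2} :
    (v, w) ∈ emb2 L ↔ v ∈ L ∧ w = 0 := by
  constructor
  · rintro ⟨x, hx, hxe⟩
    have h1 : x = v := congrArg Prod.fst hxe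
    have h2 : (0 : K2) = w := congrArg Prod.snd hxe
    exact ⟨h1 ▸ hx, h2.symm⟩
  · rintro ⟨hv, rfl⟩
    exact ⟨v, hv, rfl⟩

lemma finrank_emb2 (L : Submodule (ZMod 2) V) :
    Module.finrank (ZMod 2) (emb2 L) = Module.finrank (ZMod 2) L :=
  (LinearEquiv.finrank_eq
    (Submodule.equivMapOfInjective (LinearMap.inl (ZMod 2) V K2) LinearMap.inl_injective L)).symm

lemma cc_add (𝓛 𝓜 : Multiset (Submodule (ZMod 2) V)) (v : V) :
    cc (𝓛 + 𝓜) v = cc 𝓛 v + cc 𝓜 v := by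
  unfold cc; rw [Multiset.filter_add, Multiset.card_add]

lemma cc_replicate (n : ℕ) (L : Submodule (ZMod 2) V) (v : V) :
    cc (Multiset.replicate n L) v = if v ∈ L then n else 0 := by
  unfold cc
  by_cases h : v ∈ L
  · rw [if_pos h, Multiset.filter_eq_self.2 fun a ha => by rwa [Multiset.eq_of_mem_replicate ha]]
    simp
  · rw [if_neg h, Multiset.filter_eq_nil.2 fun a ha => by rwa [Multiset.eq_of_mem_replicate ha]]
    simp

lemma cc_bind {α : Type*} (s : Multiset α) (f : α → Multiset (Submodule (ZMod 2) V)) (v : V) :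
    cc (s.bind f) v = (s.map (fun a => cc (f a) v)).sum := by
  unfold cc
  induction s using Multiset.induction with
  | empty => simp
  | cons a s ih => simp [Multiset.cons_bind, Multiset.filter_add, ih]

lemma cc_map_eq_sum_ite (s : Multiset (Submodule (ZMod 2) V)) (p : Submodule (ZMod 2) V → Prop) :
    (s.map (fun L => if p L then 1 else 0)).sum = Multiset.card (s.filter p) := by
  induction s using Multiset.induction with
  | empty => simp
  | cons a s ih =>
    rw [Multiset.map_cons, Multiset.sum_cons, Multiset.filter_cons, ih]
    split <;> simp [Nat.add_comm]

def HasPart (σ : ℕ) (V : Type*) [AddCommGroup V] [Module (ZMod 2) V] : Prop :=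
  ∃ 𝓛 : Multiset (Submodule (ZMod 2) V),
    (∀ L ∈ 𝓛, Module.finrank (ZMod 2) L = 2) ∧ ∀ v : V, v ≠ 0 → cc 𝓛 v = σ

lemma HasPart.congr {W : Type*} [AddCommGroup W] [Module (ZMod 2) W]
    (e : V ≃ₗ[ZMod 2] W) {σ : ℕ} (h : HasPart σ V) : HasPart σ W := by
  obtain ⟨𝓛, hline, hcov⟩ := h
  refine ⟨𝓛.map (Submodule.map (e : V →ₗ[ZMod 2] W)), ?_, ?_⟩
  · intro L hL
    obtain ⟨M, hM, rfl⟩ := Multiset.mem_map.1 hL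
    rw [show Submodule.map (e : V →ₗ[ZMod 2] W) M = M.map (e : V →ₗ[ZMod 2] W) from rfl,
      LinearEquiv.finrank_map_eq e M]
    exact hline M hM
  · intro w hw
    unfold cc
    rw [Multiset.filter_map, Multiset.card_map]
    have : ∀ M ∈ 𝓛, ((fun L => w ∈ L) ∘ Submodule.map (e : V →ₗ[ZMod 2] W)) M ↔ e.symm w ∈ M := by
      intro M _
      simp only [Function.comp]
      constructor
      · rintro ⟨x, hx, hxe⟩
        rwa [show x = e.symm w by simpa using congrArg e.symm hxe] at hx
      · intro hm
        exact ⟨e.symm w, hm, by simp⟩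
    rw [Multiset.filter_congr this]
    exact hcov _ (by simpa using hw)

theorem HasPart.step [Module.Finite (ZMod 2) V] {σ : ℕ} (h : HasPart σ V) :
    HasPart σ (V × K2) := by
  classical
  obtain ⟨𝓛, hline, hcov⟩ := h
  have hrep : ∀ L ∈ 𝓛, (repr2 L).1 ≠ 0 ∧ (repr2 L).2 ≠ 0 ∧ (repr2 L).1 ≠ (repr2 L).2 ∧
      L = Submodule.span (ZMod 2) {(repr2 L).1, (repr2 L).2} := by
    intro L hL
    exact repr2_spec (line_rep (hline L hL))
  set X : Submodule (ZMod 2) (V × K2) :=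
    Submodule.span (ZMod 2) {((0:V), (![1,0] : K2)), ((0:V), (![0,1] : K2))} with hX
  have memX : ∀ (v : V) (w : K2), ((v, w) ∈ X ↔ v = 0) := by
    intro v w
    rw [hX, mem_span_pair_two]
    constructor
    · rintro (h | h | h | h) <;>
        simpa using congrArg Prod.fst h
    · rintro rfl
      have : ∀ w : K2, w = 0 ∨ w = ![1,0] ∨ w = ![0,1] ∨ w = ![1,0] + ![0,1] := by decide
      rcases this w with h | h | h | h <;> subst h <;> simp [Prod.ext_iff, Prod.mk_add_mk]
  refine ⟨𝓛.map emb2 + Multiset.replicate σ X + 𝓛.bind latinOf, ?_, ?_⟩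
  · intro L hL
    rcases Multiset.mem_add.1 hL with hL | hL
    · rcases Multiset.mem_add.1 hL with hL | hL
      · obtain ⟨M, hM, rfl⟩ := Multiset.mem_map.1 hL
        rw [finrank_emb2]; exact hline M hM
      · rw [Multiset.eq_of_mem_replicate hL, hX]
        exact finrank_span_pair_two
          (by simp [Prod.ext_iff, show (![1,0]:K2) ≠ 0 by decide])
          (by simp [Prod.ext_iff, show (![0,1]:K2) ≠ 0 by decide])
          (by simp [Prod.ext_iff, show (![1,0]:K2) ≠ ![0,1] by decide])
    · obtain ⟨M, hM, hLM⟩ := Multiset.mem_bind.1 hL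
      obtain ⟨ha, hb, hab, _⟩ := hrep M hM
      have : L = Submodule.span (ZMod 2) {((repr2 M).1, (![1,0]:K2)), ((repr2 M).2, ![0,1])} ∨
          L = Submodule.span (ZMod 2) {((repr2 M).1, (![0,1]:K2)), ((repr2 M).2, ![1,1])} ∨
          L = Submodule.span (ZMod 2) {((repr2 M).1, (![1,1]:K2)), ((repr2 M).2, ![1,0])} := by
        simpa [latinOf, latin] using hLM
      rcases this with rfl | rfl | rfl <;>
        exact finrank_span_pair_two (by simp [Prod.ext_iff, ha]) (by simp [Prod.ext_iff, hb])
          (by simp [Prod.ext_iff, hab])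
  · rintro ⟨v, w⟩ hvw
    rw [cc_add, cc_add, cc_replicate, cc_bind]
    have hmap : cc (𝓛.map emb2) (v, w) = if w = 0 then cc 𝓛 v else 0 := by
      unfold cc
      rw [Multiset.filter_map, Multiset.card_map]
      by_cases hw : w = 0
      · subst hw
        rw [if_pos rfl]
        rw [Multiset.filter_congr (q := fun M => v ∈ M) (fun M _ => by
          simp [Function.comp, mem_emb2])]
      · rw [if_neg hw]
        rw [Multiset.filter_congr (q := fun _ => False) (fun M _ => by
          simp [Function.comp, mem_emb2, hw])]
        exact Multiset.card_eq_zero.2 (Multiset.filter_eq_nil.2 (fun _ _ h => h))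
    rw [hmap, memX]
    by_cases hw : w = 0
    · subst hw
      have hv : v ≠ 0 := by simpa [Prod.ext_iff] using hvw
      rw [if_pos rfl, if_neg hv]
      have : (𝓛.map fun M => cc (latinOf M) (v, (0:K2))).sum = 0 := by
        exact Multiset.sum_eq_zero (fun x hx => by
          obtain ⟨M, hM, rfl⟩ := Multiset.mem_map.1 hx
          exact latin_cc_wzero (repr2 M).1 (repr2 M).2 v hv)
      rw [this, hcov v hv]
      simp
    · rw [if_neg hw]
      by_cases hv : v = 0
      · subst hv
        rw [if_pos rfl]
        have : (𝓛.map fun M => cc (latinOf M) ((0:V), w)).sum = 0 := by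
          exact Multiset.sum_eq_zero (fun x hx => by
            obtain ⟨M, hM, rfl⟩ := Multiset.mem_map.1 hx
            obtain ⟨ha, hb, hab, _⟩ := hrep M hM
            exact latin_cc_vzero ha hb hab w hw)
        rw [this]
        simp
      · rw [if_neg hv]
        rw [show (𝓛.map fun M => cc (latinOf M) (v, w)) = 𝓛.map (fun M => if v ∈ M then 1 else 0) from
          Multiset.map_congr rfl (fun M hM => by
            obtain ⟨ha, hb, hab, hspan⟩ := hrep M hM
            have := latin_cc ha hb hab v w hv hw
            rw [show latinOf M = latin (repr2 M).1 (repr2 M).2 from rfl, this, ← hspan]),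
          cc_map_eq_sum_ite]
        show 0 + 0 + cc 𝓛 v = σ
        rw [hcov v hv]
        simp

/-! ### Transfer to `Fin` tuples -/


lemma HasPart.step' {σ m : ℕ} (h : HasPart σ (Vec m)) : HasPart σ (Vec (m + 2)) := by
  have h2 : HasPart σ (Vec m × K2) := h.step
  refine h2.congr ?_
  exact ((LinearEquiv.sumArrowLequivProdArrow (Fin m) (Fin 2) (ZMod 2) (ZMod 2)).symm).trans
    (LinearEquiv.funCongrLeft (ZMod 2) (ZMod 2) finSumFinEquiv.symm)

lemma base2 : HasPart 1 (Vec 2) := by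
  refine ⟨{⊤}, ?_, ?_⟩
  · intro L hL
    rw [Multiset.mem_singleton.1 hL]
    rw [finrank_top]
    simp [Module.finrank_fin_fun]
  · intro v hv
    show cc (⊤ ::ₘ 0) v = 1
    rw [cc_cons, cc_zero, if_pos Submodule.mem_top]

lemma base3 : HasPart 3 (Vec 3) := by
  set p1 : Vec 3 := ![1,0,0]
  set p2 : Vec 3 := ![0,1,0]
  set p3 : Vec 3 := ![0,0,1]
  set p4 : Vec 3 := ![1,1,0]
  set p5 : Vec 3 := ![1,0,1]
  set p6 : Vec 3 := ![0,1,1]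
  refine ⟨Submodule.span (ZMod 2) {p1, p2} ::ₘ Submodule.span (ZMod 2) {p1, p3} ::ₘ
    Submodule.span (ZMod 2) {p2, p3} ::ₘ Submodule.span (ZMod 2) {p1, p6} ::ₘ
    Submodule.span (ZMod 2) {p2, p5} ::ₘ Submodule.span (ZMod 2) {p3, p4} ::ₘ
    Submodule.span (ZMod 2) {p4, p5} ::ₘ 0, ?_, ?_⟩
  · intro L hL
    simp only [Multiset.mem_cons, Multiset.notMem_zero, or_false] at hL
    rcases hL with rfl | rfl | rfl | rfl | rfl | rfl | rfl <;>
      exact finrank_span_pair_two (by decide) (by decide) (by decide)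
  · intro v hv
    have hc : v = p1 ∨ v = p2 ∨ v = p3 ∨ v = p4 ∨ v = p5 ∨ v = p6 ∨ v = ![1,1,1] := by
      have : ∀ w : Vec 3, w = 0 ∨ w = p1 ∨ w = p2 ∨ w = p3 ∨ w = p4 ∨ w = p5 ∨ w = p6 ∨
          w = ![1,1,1] := by decide
      rcases this v with h | h; exact absurd h hv; exact h
    simp only [cc_cons, cc_zero, mem_span_pair_two]
    rcases hc with rfl | rfl | rfl | rfl | rfl | rfl | rfl <;>
      simp (config := { decide := true }) [p1, p2, p3, p4, p5, p6]

/-! ### Counting direction -/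

lemma line_card3 {r : ℕ} {L : Submodule (ZMod 2) (Vec r)}
    (hL : Module.finrank (ZMod 2) L = 2) :
    (Finset.univ.filter (fun v : Vec r => v ≠ 0 ∧ v ∈ L)).card = 3 := by
  obtain ⟨a, b, ha, hb, hab, rfl⟩ := line_rep hL
  have hab0 : a + b ≠ 0 := fun h => hab (eq_of_add_eq_zero' h)
  have haab : a ≠ a + b := fun h => hb (by simpa using (left_eq_add.mp h))
  have hbab : b ≠ a + b := fun h => ha (by simpa using (right_eq_add.mp h))
  have : (Finset.univ.filter (fun v : Vec r => v ≠ 0 ∧ v ∈ Submodule.span (ZMod 2) {a, b}))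
      = {a, b, a + b} := by
    ext v
    simp only [Finset.mem_filter, Finset.mem_univ, true_and, mem_span_pair_two,
      Finset.mem_insert, Finset.mem_singleton]
    constructor
    · rintro ⟨hv, rfl | h⟩
      · exact absurd rfl hv
      · exact h
    · rintro (rfl | rfl | rfl)
      exacts [⟨ha, Or.inr (Or.inl rfl)⟩, ⟨hb, Or.inr (Or.inr (Or.inl rfl))⟩,
        ⟨hab0, Or.inr (Or.inr (Or.inr rfl))⟩]
  rw [this]
  rw [Finset.card_insert_of_notMem (by simp [hab, haab]),
    Finset.card_insert_of_notMem (by simp [hbab]), Finset.card_singleton]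

lemma sum_cc_finset {r : ℕ} (S : Finset (Vec r)) (𝓛 : Multiset (Submodule (ZMod 2) (Vec r))) :
    ∑ v ∈ S, cc 𝓛 v = (𝓛.map (fun L => (S.filter (fun v => v ∈ L)).card)).sum := by
  induction 𝓛 using Multiset.induction with
  | empty => simp
  | cons L 𝓛 ih =>
    simp only [Multiset.map_cons, Multiset.sum_cons, ← ih, cc_cons]
    rw [Finset.sum_add_distrib]
    congr 1
    simp [Finset.sum_ite, Finset.filter_filter]

lemma even_of_dvd_pow {r : ℕ} (h : 3 ∣ 2 ^ r - 1) : Even r := by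
  rcases Nat.even_or_odd r with he | ho
  · exact he
  · exfalso
    have h1 : 1 ≤ 2 ^ r := Nat.one_le_two_pow
    have h0 : ((2 ^ r - 1 : ℕ) : ZMod 3) = 0 := (ZMod.natCast_eq_zero_iff _ _).2 h
    rw [Nat.cast_sub h1] at h0
    push_cast at h0
    rw [show (2 : ZMod 3) = -1 by decide, Odd.neg_one_pow ho] at h0
    exact absurd h0 (by decide)

lemma even_of_haspart {r : ℕ} (h : HasPart 1 (Vec r)) : Even r := by
  obtain ⟨𝓛, hline, hcov⟩ := h
  set S : Finset (Vec r) := Finset.univ.filter (fun v => v ≠ 0) with hS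
  have hcard : S.card = 2 ^ r - 1 := by
    rw [hS, Finset.filter_ne', Finset.card_erase_of_mem (Finset.mem_univ _)]
    simp [Fintype.card_fun]
  have lhs : ∑ v ∈ S, cc 𝓛 v = 2 ^ r - 1 := by
    rw [Finset.sum_congr rfl (fun v hv => hcov v (by simpa [hS] using hv))]
    simp [hcard]
  have rhs : ∑ v ∈ S, cc 𝓛 v = Multiset.card 𝓛 * 3 := by
    rw [sum_cc_finset]
    rw [Multiset.map_congr rfl (fun L hL => ?_)]
    · rw [Multiset.map_const', Multiset.sum_replicate, smul_eq_mul]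
    · show (S.filter (fun v => v ∈ L)).card = 3
      rw [hS, Finset.filter_filter]
      exact line_card3 (hline L hL)
  exact even_of_dvd_pow ⟨Multiset.card 𝓛, by omega⟩

lemma point_rep {r : ℕ} {P : Submodule (ZMod 2) (Vec r)} (hP : isPoint P) :
    ∃ v : Vec r, v ≠ 0 ∧ P = Submodule.span (ZMod 2) {v} := by
  let bb := Module.finBasisOfFinrankEq (ZMod 2) P hP
  refine ⟨(bb 0 : Vec r), by simpa using bb.ne_zero 0, ?_⟩
  have hsp := bb.span_eq
  have h2 := congrArg (Submodule.map P.subtype) hsp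
  rw [Submodule.map_top, Submodule.range_subtype, Submodule.map_span] at h2
  have hset : (⇑P.subtype '' Set.range ⇑bb) = {(bb 0 : Vec r)} := by
    ext v
    simp only [Set.mem_image, Set.mem_range, Set.mem_singleton_iff]
    constructor
    · rintro ⟨x, ⟨i, rfl⟩, rfl⟩
      fin_cases i; simp
    · rintro rfl
      exact ⟨bb 0, ⟨0, rfl⟩, rfl⟩
  rw [hset] at h2
  exact h2.symm

open scoped Classical in
lemma coverCount_eq_cc {r : ℕ} (𝓛 : Multiset (Submodule (ZMod 2) (Vec r))) (v : Vec r) :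
    coverCount 𝓛 (Submodule.span (ZMod 2) {v}) = cc 𝓛 v := by
  unfold coverCount cc
  congr 1
  exact Multiset.filter_congr (fun W _ => Submodule.span_singleton_le_iff_mem v W)

lemma haspart_form {σ r : ℕ} (h : HasPart σ (Vec r)) :
    ∃ 𝓛 : Multiset (Submodule (ZMod 2) (Vec r)), (∀ L ∈ 𝓛, isLine L) ∧
      ∀ P, isPoint P → coverCount 𝓛 P = σ := by
  obtain ⟨𝓛, hline, hcov⟩ := h
  refine ⟨𝓛, hline, fun P hP => ?_⟩
  obtain ⟨v, hv, rfl⟩ := point_rep hP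
  rw [coverCount_eq_cc]
  exact hcov v hv

lemma aux1 : ∀ k : ℕ, HasPart 1 (Vec (2 * k + 2)) := by
  intro k
  induction k with
  | zero => exact base2
  | succ k ih =>
    have := ih.step'
    have e : 2 * k + 2 + 2 = 2 * (k + 1) + 2 := by ring
    exact e ▸ this

lemma aux3 : ∀ k : ℕ, HasPart 3 (Vec (2 * k + 3)) := by
  intro k
  induction k with
  | zero => exact base3
  | succ k ih =>
    have := ih.step'
    have e : 2 * k + 3 + 2 = 2 * (k + 1) + 3 := by ring
    exact e ▸ this

/-- The points of `PG(r-1,2)` can be partitioned into lines iff `r` is even (a line spread);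
moreover for odd `r ≥ 3` the triple multiset of all points can be partitioned into lines. -/
theorem line_spread_iff_even (r : ℕ) (hr : 2 ≤ r) :
    ((∃ 𝓛 : Multiset (Submodule (ZMod 2) (Vec r)), (∀ L ∈ 𝓛, isLine L) ∧
        ∀ P, isPoint P → coverCount 𝓛 P = 1) ↔ Even r) ∧
    (3 ≤ r → Odd r → ∃ 𝓛 : Multiset (Submodule (ZMod 2) (Vec r)), (∀ L ∈ 𝓛, isLine L) ∧
        ∀ P, isPoint P → coverCount 𝓛 P = 3) := by
  constructor
  · constructor
    · rintro ⟨𝓛, hline, hcov⟩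
      refine even_of_haspart ⟨𝓛, hline, fun v hv => ?_⟩
      rw [← coverCount_eq_cc]
      exact hcov _ (finrank_span_singleton hv)
    · intro hEven
      obtain ⟨k, rfl⟩ : ∃ k, r = 2 * k + 2 := ⟨r / 2 - 1, by obtain ⟨t, rfl⟩ := hEven; omega⟩
      exact haspart_form (aux1 k)
  · intro h3 hodd
    obtain ⟨k, rfl⟩ : ∃ k, r = 2 * k + 3 := ⟨(r - 3) / 2, by obtain ⟨t, ht⟩ := hodd; omega⟩
    exact haspart_form (aux3 k)
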